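/- Every Lindelöf first countable Hausdorff space has cardinality at most 2^ℵ₀ (Arhangel'skii's theorem). -/

import Mathlib

open Cardinal Set Filter Topology

universe u

namespace Arhangelskii

variable {X : Type u} [TopologicalSpace X] [FirstCountableTopology X] [T2Space X]

/-- Closure of a set of size at most continuum has size at most continuum. -/
lemma mk_closure_le (A : Set X) (hA : #A ≤ 𝔠) : #(closure A) ≤ 𝔠 := by
  have key : ∀ y : closure A, ∃ u : ℕ → X, (∀ n, u n ∈ A) ∧ Tendsto u atTop (𝓝 (y : X)) := by
    intro y
    exact mem_closure_iff_seq_limit.1 y.2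
  choose f hf hf' using key
  have hinj : Function.Injective f := by
    intro y z hyz
    have := hf' y
    rw [hyz] at this
    exact Subtype.ext (tendsto_nhds_unique this (hf' z))
  calc #(closure A) ≤ #(ℕ → A) := by
        refine mk_le_of_injective (f := fun y n => (⟨f y n, hf y n⟩ : A)) ?_
        intro y z h
        apply hinj
        funext n
        exact congrArg Subtype.val (congrFun h n)
    _ = (#A) ^ (ℵ₀ : Cardinal.{u}) := by
        rw [mk_arrow]; simp
    _ ≤ 𝔠 ^ (ℵ₀ : Cardinal.{u}) := power_le_power_right hA
    _ = 𝔠 := continuum_power_aleph0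

/-- A choice of countable open neighborhood basis. -/
noncomputable def nb (x : X) : ℕ → Set X :=
  fun n => interior ((𝓝 x).exists_antitone_basis.choose n)

lemma nb_mem (x : X) (n : ℕ) : x ∈ nb x n := by
  have h := (𝓝 x).exists_antitone_basis.choose_spec
  exact mem_interior_iff_mem_nhds.2 (h.1.mem_of_mem trivial)

lemma nb_open (x : X) (n : ℕ) : IsOpen (nb x n) := isOpen_interior

lemma nb_sub (x : X) {U : Set X} (hU : U ∈ 𝓝 x) : ∃ n, nb x n ⊆ U := by
  have h := (𝓝 x).exists_antitone_basis.choose_spec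
  obtain ⟨n, -, hn⟩ := h.1.mem_iff.1 hU
  exact ⟨n, interior_subset.trans hn⟩

variable [Nonempty X]

open scoped Classical in
/-- Pick a point outside a countable union of basic neighborhoods, if one exists. -/
noncomputable def pk (g : ℕ → X × ℕ) : X :=
  if h : ∃ z, z ∉ ⋃ n, nb (g n).1 (g n).2 then h.choose else Classical.arbitrary X

lemma pk_spec {g : ℕ → X × ℕ} (h : ∃ z, z ∉ ⋃ n, nb (g n).1 (g n).2) :
    pk g ∉ ⋃ n, nb (g n).1 (g n).2 := by
  classical
  rw [pk, dif_pos h]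
  exact h.choose_spec

/-- Witness points for all countable families of basic neighborhoods of points of `S`. -/
def Dset (S : Set X) : Set X := pk '' {g | ∀ n, (g n).1 ∈ S}

lemma mk_Dset_le {S : Set X} (hS : #S ≤ 𝔠) : #(Dset S) ≤ 𝔠 := by
  have h1 : #(Dset S) ≤ #{g : ℕ → X × ℕ | ∀ n, (g n).1 ∈ S} := mk_image_le
  have h2 : #{g : ℕ → X × ℕ | ∀ n, (g n).1 ∈ S} ≤ #(ℕ → S × ℕ) := by
    refine mk_le_of_injective
      (f := fun g => fun n => ((⟨(g.1 n).1, g.2 n⟩ : S), (g.1 n).2)) ?_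
    intro g g' h
    ext n
    · have h2 := congrFun h n
      simp only [Prod.mk.injEq, Subtype.mk.injEq] at h2
      exact h2.1
    · have h2 := congrFun h n
      simp only [Prod.mk.injEq, Subtype.mk.injEq] at h2
      exact h2.2
  have h3 : #(ℕ → S × ℕ) ≤ 𝔠 := by
    have hSN : #(S × ℕ) ≤ 𝔠 := by
      have : #(S × ℕ) = #S * ℵ₀ := by simp [mk_prod]
      rw [this]
      calc #S * ℵ₀ ≤ 𝔠 * 𝔠 := mul_le_mul' hS aleph0_le_continuum
        _ = 𝔠 := by simp
    calc #(ℕ → S × ℕ) = (#(S × ℕ)) ^ (ℵ₀ : Cardinal.{u}) := by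
          rw [mk_arrow]; simp
      _ ≤ 𝔠 ^ (ℵ₀ : Cardinal.{u}) := power_le_power_right hSN
      _ = 𝔠 := continuum_power_aleph0
  exact h1.trans (h2.trans h3)

/-- The index well-order of type ω₁. -/
abbrev W : Type u := (Cardinal.aleph 1 : Cardinal.{u}).ord.ToType

/-- The transfinite chain of closed sets. -/
noncomputable def fam (x0 : X) : W.{u} → Set X :=
  (wellFounded_lt (α := W.{u})).fix fun i ih =>
    closure (insert x0 ((⋃ j : {j : W.{u} // j < i}, ih j j.2) ∪
      Dset (⋃ j : {j : W.{u} // j < i}, ih j j.2)))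

/-- Union of the chain below `i`. -/
noncomputable def prev (x0 : X) (i : W.{u}) : Set X :=
  ⋃ j : {j : W.{u} // j < i}, fam x0 j

lemma fam_eq (x0 : X) (i : W.{u}) :
    fam x0 i = closure (insert x0 (prev x0 i ∪ Dset (prev x0 i))) := by
  rw [fam, WellFounded.fix_eq]
  rfl

lemma isClosed_fam (x0 : X) (i : W.{u}) : IsClosed (fam x0 i) := by
  rw [fam_eq]; exact isClosed_closure

lemma fam_mono (x0 : X) {j i : W.{u}} (h : j < i) : fam x0 j ⊆ fam x0 i := by
  rw [fam_eq x0 i]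
  refine subset_trans ?_ ((subset_insert _ _).trans subset_closure)
  exact subset_union_left.trans' (subset_iUnion (fun j : {j : W.{u} // j < i} => fam x0 j) ⟨j, h⟩)

lemma mk_lt_aleph1 (i : W.{u}) : #{j : W.{u} // j < i} ≤ ℵ₀ := by
  have := card_typein_toType_lt (Cardinal.aleph 1) i
  exact ((countable_iff_lt_aleph_one _).2 this).le_aleph0

lemma mk_fam_le (x0 : X) (i : W.{u}) : #(fam x0 i) ≤ 𝔠 := by
  induction i using WellFoundedLT.induction with
  | ind i ih =>
    have hprev : #(prev x0 i) ≤ 𝔠 := by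
      have h1 : #(prev x0 i) ≤ #{j : W.{u} // j < i} * ⨆ j : {j : W.{u} // j < i}, #(fam x0 j) :=
        mk_iUnion_le _
      have h2 : (⨆ j : {j : W.{u} // j < i}, #(fam x0 (j : W.{u}))) ≤ 𝔠 :=
        ciSup_le' fun j => ih j j.2
      calc #(prev x0 i) ≤ #{j : W.{u} // j < i} * ⨆ j : {j : W.{u} // j < i}, #(fam x0 j) := h1
        _ ≤ 𝔠 * 𝔠 :=
            mul_le_mul' ((mk_lt_aleph1 i).trans aleph0_le_continuum) h2
        _ = 𝔠 := by simp
    rw [fam_eq]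
    apply mk_closure_le
    have : #(insert x0 (prev x0 i ∪ Dset (prev x0 i)) : Set X) ≤
        #((prev x0 i ∪ Dset (prev x0 i) : Set X)) + 1 := mk_insert_le
    refine this.trans ?_
    have hu : #((prev x0 i ∪ Dset (prev x0 i) : Set X)) ≤ 𝔠 := by
      refine (mk_union_le _ _).trans ?_
      calc #(prev x0 i) + #(Dset (prev x0 i)) ≤ 𝔠 + 𝔠 := add_le_add hprev (mk_Dset_le hprev)
        _ = 𝔠 := by simp
    calc #((prev x0 i ∪ Dset (prev x0 i) : Set X)) + 1 ≤ 𝔠 + 𝔠 :=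
          add_le_add hu (one_le_aleph0.trans aleph0_le_continuum)
      _ = 𝔠 := by simp

lemma main [LindelofSpace X] : #X ≤ 𝔠 := by
  have x0 : X := Classical.arbitrary X
  set T : Set X := ⋃ i : W.{u}, fam x0 i with hT
  -- cardinality of T
  have hTcard : #T ≤ 𝔠 := by
    have h1 : #T ≤ #(W.{u}) * ⨆ i : W.{u}, #(fam x0 i) := mk_iUnion_le _
    have h2 : (⨆ i : W.{u}, #(fam x0 i)) ≤ 𝔠 := ciSup_le' fun i => mk_fam_le x0 i
    have h3 : #(W.{u}) ≤ 𝔠 := by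
      rw [Cardinal.mk_toType, card_ord]
      exact aleph_one_le_continuum
    calc #T ≤ #(W.{u}) * ⨆ i : W.{u}, #(fam x0 i) := h1
      _ ≤ 𝔠 * 𝔠 := mul_le_mul' h3 h2
      _ = 𝔠 := by simp
  -- countable subsets of W are bounded
  haveI : IsWellOrder W.{u} (· < ·) := { }
  have hbdd : ∀ s : Set W.{u}, s.Countable → ∃ j : W.{u}, ∀ i ∈ s, i < j := by
    intro s hs
    have hcof : #s < Ordinal.cof (Ordinal.type ((· < ·) : W.{u} → W.{u} → Prop)) := by
      rw [Ordinal.type_toType, Cardinal.isRegular_aleph_one.cof_eq]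
      exact (countable_iff_lt_aleph_one _).1 hs
    obtain ⟨j, hj⟩ := (not_isCofinal_iff (s := s)).1 (fun hc => (Order.cof_le hc).not_gt (lt_of_lt_of_eq hcof (Ordinal.cof_type W.{u})))
    exact ⟨j, hj⟩
  -- T is closed
  have hTclosed : IsClosed T := by
    rw [← closure_subset_iff_isClosed]
    intro y hy
    obtain ⟨u, hu, hulim⟩ := mem_closure_iff_seq_limit.1 hy
    have : ∀ n, ∃ i : W.{u}, u n ∈ fam x0 i := fun n => mem_iUnion.1 (hu n)
    choose iseq hiseq using this
    obtain ⟨j, hj⟩ := hbdd (range iseq) (countable_range iseq)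
    have huj : ∀ n, u n ∈ fam x0 j := fun n =>
      fam_mono x0 (hj _ (mem_range_self n)) (hiseq n)
    have : y ∈ fam x0 j := by
      rw [← (isClosed_fam x0 j).closure_eq]
      exact mem_closure_of_tendsto hulim (Eventually.of_forall huj)
    exact mem_iUnion.2 ⟨j, this⟩
  -- T = univ
  have hTuniv : T = Set.univ := by
    by_contra hne
    obtain ⟨x, hx⟩ := (Set.ne_univ_iff_exists_notMem T).1 hne
    -- for each y in T, choose a basic neighborhood avoiding x
    have hsep : ∀ y : T, ∃ m : ℕ, x ∉ nb (y : X) m := by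
      rintro ⟨y, hy⟩
      have hxy : x ≠ y := fun h => hx (h ▸ hy)
      obtain ⟨V, Wy, hV, hWy, hxV, hyW, hdisj⟩ := t2_separation hxy
      obtain ⟨m, hm⟩ := nb_sub y (hWy.mem_nhds hyW)
      refine ⟨m, fun hc => ?_⟩
      exact (disjoint_left.1 hdisj) hxV (hm hc)
    choose nn hnn using hsep
    -- T is Lindelof, covered by basic neighborhoods
    have hTlin : IsLindelof T := isLindelof_univ.of_isClosed_subset hTclosed (subset_univ T)
    have hcov : T ⊆ ⋃ y : T, nb (y : X) (nn y) := fun z hz =>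
      mem_iUnion.2 ⟨⟨z, hz⟩, nb_mem z (nn ⟨z, hz⟩)⟩
    obtain ⟨c, hc_count, hc_cov⟩ :=
      hTlin.elim_countable_subcover (fun y : T => nb (y : X) (nn y))
        (fun y => nb_open _ _) hcov
    -- T is nonempty (it contains x0)
    have hWne : Nonempty W.{u} := by
      rw [Ordinal.toType_nonempty_iff_ne_zero]
      simp only [ne_eq, Cardinal.ord_eq_zero]
      exact (Cardinal.aleph_pos 1).ne'

    have hx0T : x0 ∈ T := by
      refine mem_iUnion.2 ⟨Classical.arbitrary _, ?_⟩
      rw [fam_eq]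
      exact subset_closure (mem_insert _ _)
    have hc_ne : c.Nonempty := by
      obtain ⟨y, hy⟩ := mem_iUnion₂.1 (hc_cov hx0T)
      exact ⟨y, hy.1⟩
    obtain ⟨e, he⟩ := Set.Countable.exists_eq_range hc_count hc_ne
    -- bound the countable family inside some prev j
    have : ∀ k : ℕ, ∃ i : W.{u}, ((e k : T) : X) ∈ fam x0 i := fun k =>
      mem_iUnion.1 (e k).2
    choose iseq hiseq using this
    obtain ⟨j, hj⟩ := hbdd (range iseq) (countable_range iseq)
    set g : ℕ → X × ℕ := fun k => (((e k : T) : X), nn (e k)) with hg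
    have hgmem : ∀ k, (g k).1 ∈ prev x0 j := fun k =>
      mem_iUnion.2 ⟨⟨iseq k, hj _ (mem_range_self k)⟩, hiseq k⟩
    -- the witness point
    have hwit : ∃ z, z ∉ ⋃ k, nb (g k).1 (g k).2 := by
      refine ⟨x, fun hc => ?_⟩
      obtain ⟨k, hk⟩ := mem_iUnion.1 hc
      exact hnn (e k) hk
    have hzD : pk g ∈ Dset (prev x0 j) := ⟨g, hgmem, rfl⟩
    have hzT : pk g ∈ T := by
      refine mem_iUnion.2 ⟨j, ?_⟩
      rw [fam_eq]
      exact subset_closure (mem_insert_of_mem _ (mem_union_right _ hzD))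
    -- but pk g is covered by the family, contradiction
    have := hc_cov hzT
    obtain ⟨y, hy, hy2⟩ := mem_iUnion₂.1 this
    rw [he] at hy
    obtain ⟨k, hk⟩ := hy
    apply pk_spec hwit
    refine mem_iUnion.2 ⟨k, ?_⟩
    rw [hg]
    simp only []
    rw [hk]
    exact hy2
  calc #X = #T := by rw [hTuniv]; exact mk_univ.symm
    _ ≤ 𝔠 := hTcard

end Arhangelskii

/-- Arhangel'skii: Every Lindelöf first countable Hausdorff space has
cardinality at most 2^ℵ₀. -/
theorem arhangelskii (X : Type*) [TopologicalSpace X] [LindelofSpace X]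
    [FirstCountableTopology X] [T2Space X] :
    Cardinal.mk X ≤ Cardinal.continuum := by
  rcases isEmpty_or_nonempty X with h | h
  · simp [Cardinal.mk_eq_zero]
  · exact Arhangelskii.main
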